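/- Let g₁ : [0,∞) → ℝ be defined by g₁(t) = 1/(√(1+t²) + t) = √(1+t²) − t. Then for every k ∈ ℕ there exists C > 0 such that |g₁^{(k)}(t)| ≤ C·(1+t)^{−1−k} for all t ≥ 0, where g₁^{(k)} denotes the k-th derivative (one-sided at t = 0, or equivalently the derivative of the smooth extension t ↦ √(1+t²) − t of g₁ to all of ℝ). -/

import Mathlib

open Polynomial Finset

noncomputable def hh (t : ℝ) : ℝ := Real.sqrt (1 + t^2)

lemma hh_pos (t : ℝ) : 0 < hh t := Real.sqrt_pos.2 (by positivity)

lemma hh_sq (t : ℝ) : hh t ^ 2 = 1 + t^2 := Real.sq_sqrt (by positivity)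

lemma hh_hasDeriv (t : ℝ) : HasDerivAt hh (t / hh t) t := by
  have h1 : HasDerivAt (fun x : ℝ => 1 + x^2) (2*t) t := by
    simpa using ((hasDerivAt_pow 2 t).const_add 1)
  have h2 := h1.sqrt (x := t) (by positivity)
  convert h2 using 1
  · rfl
  rw [show Real.sqrt (1 + t^2) = hh t from rfl, mul_div_mul_left _ _ (two_ne_zero)]

lemma hh_lb (t : ℝ) (ht : 0 ≤ t) : 1 + t ≤ 2 * hh t := by
  nlinarith [hh_pos t, hh_sq t, sq_nonneg (t - 1), sq_nonneg (2 * hh t - 1 - t)]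

lemma t_le_hh (t : ℝ) (ht : 0 ≤ t) : t ≤ hh t := by
  nlinarith [hh_pos t, hh_sq t]

lemma sub_bound (t : ℝ) (ht : 0 ≤ t) : (hh t - t) * (1 + t) ≤ 2 := by
  nlinarith [hh_pos t, hh_sq t, hh_lb t ht, t_le_hh t ht]

lemma g_hasDeriv (t : ℝ) :
    HasDerivAt (fun x : ℝ => Real.sqrt (1+x^2) - x) (t / hh t - 1) t := by
  have := (hh_hasDeriv t).sub (hasDerivAt_id t)
  exact this

lemma eval_bound (p : ℝ[X]) (n : ℕ) (hn : p.natDegree ≤ n) (t : ℝ) (ht : 0 ≤ t) :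
    |p.eval t| ≤ (∑ i ∈ range (n+1), |p.coeff i|) * (1+t)^n := by
  rw [Polynomial.eval_eq_sum_range' (lt_of_le_of_lt hn (Nat.lt_succ_self n))]
  calc |∑ i ∈ range (n+1), p.coeff i * t ^ i|
      ≤ ∑ i ∈ range (n+1), |p.coeff i * t ^ i| := Finset.abs_sum_le_sum_abs _ _
    _ ≤ ∑ i ∈ range (n+1), |p.coeff i| * (1+t)^n := by
        apply Finset.sum_le_sum
        intro i hi
        rw [abs_mul]
        apply mul_le_mul_of_nonneg_left _ (abs_nonneg _)
        rw [abs_of_nonneg (pow_nonneg ht i)]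
        calc t ^ i ≤ (1+t) ^ i := by
              apply pow_le_pow_left₀ ht (by linarith)
          _ ≤ (1+t) ^ n := by
              apply pow_le_pow_right₀ (by linarith)
                (by simpa using Nat.lt_succ_iff.mp (Finset.mem_range.mp hi))
    _ = (∑ i ∈ range (n+1), |p.coeff i|) * (1+t)^n := by rw [Finset.sum_mul]

lemma key : ∀ k : ℕ, ∃ p : ℝ[X], p.natDegree ≤ k ∧
    ∀ t : ℝ, iteratedDeriv (k+2) (fun x : ℝ => Real.sqrt (1+x^2) - x) t
      = p.eval t / hh t ^ (2*k+3) := by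
  intro k
  induction k with
  | zero =>
    refine ⟨1, by simp, fun t => ?_⟩
    rw [show (0+2 : ℕ) = 1 + 1 from rfl, iteratedDeriv_succ, iteratedDeriv_one]
    rw [show deriv (fun x : ℝ => Real.sqrt (1+x^2) - x) = fun t => t / hh t - 1
        from funext fun t => (g_hasDeriv t).deriv]
    have hd : HasDerivAt (fun t : ℝ => t / hh t - 1)
        ((1 * hh t - t * (t / hh t)) / hh t ^ 2) t :=
      ((hasDerivAt_id t).div (hh_hasDeriv t) (hh_pos t).ne').sub_const 1
    rw [hd.deriv]
    have h2 := hh_sq t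
    have h0 := (hh_pos t).ne'
    rw [eval_one]
    rw [div_eq_div_iff (by positivity) (by positivity)]
    field_simp
    linear_combination hh t^3 * h2
  | succ k ih =>
    obtain ⟨p, hdeg, hp⟩ := ih
    refine ⟨derivative p * (1 + X^2) - C (2*(k:ℝ)+3) * X * p, ?_, fun t => ?_⟩
    · apply le_trans (natDegree_sub_le _ _)
      apply max_le
      · rcases Nat.eq_zero_or_pos k with hk | hk
        · subst hk
          obtain ⟨a, rfl⟩ := Polynomial.natDegree_eq_zero.mp (Nat.le_zero.mp hdeg)
          simp
        · apply le_trans natDegree_mul_le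
          have h1 : (derivative p).natDegree ≤ k - 1 :=
            le_trans (natDegree_derivative_le p) (Nat.sub_le_sub_right hdeg 1)
          have h2 : (1 + X^2 : ℝ[X]).natDegree ≤ 2 := by compute_degree
          omega
      · apply le_trans natDegree_mul_le
        have h1 : (C (2*(k:ℝ)+3) * X).natDegree ≤ 1 :=
          (natDegree_C_mul_le _ _).trans_eq natDegree_X
        omega
    · have hrw : iteratedDeriv (k+2) (fun x : ℝ => Real.sqrt (1+x^2) - x)
          = fun t => p.eval t / hh t ^ (2*k+3) := funext hp
      rw [show k+1+2 = (k+2)+1 from rfl, iteratedDeriv_succ, hrw]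
      have h0 := (hh_pos t).ne'
      have hden : hh t ^ (2*k+3) ≠ 0 := pow_ne_zero _ h0
      have hd : HasDerivAt (fun t => p.eval t / hh t ^ (2*k+3))
          ((p.derivative.eval t * hh t ^ (2*k+3) -
            p.eval t * (((2*k+3 : ℕ) : ℝ) * hh t ^ (2*k+3-1) * (t / hh t))) / (hh t ^ (2*k+3))^2) t :=
        (p.hasDerivAt t).div ((hh_hasDeriv t).pow _) hden
      rw [hd.deriv]
      have h2 := hh_sq t
      simp only [eval_sub, eval_mul, eval_add, eval_one, eval_pow, eval_X, eval_C]
      rw [show 2*k+3-1 = 2*k+2 from rfl]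
      have e1 : hh t ^ (2*k+2) * (t / hh t) = t * hh t ^ (2*k+1) := by
        rw [pow_succ]
        field_simp
      rw [mul_assoc (((2*k+3:ℕ):ℝ)), e1, ← h2]
      rw [div_eq_div_iff (by positivity) (by positivity)]
      push_cast
      ring



/-- The function g₁(t) = √(1+t²) − t (smooth extension to ℝ of
1/(√(1+t²)+t)) satisfies, for every k ∈ ℕ, a bound
|g₁^{(k)}(t)| ≤ C·(1+t)^{−1−k} for all t ≥ 0. -/
theorem stmt11 :
    ∀ k : ℕ, ∃ C : ℝ, 0 < C ∧ ∀ t : ℝ, 0 ≤ t →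
      |iteratedDeriv k (fun x : ℝ => Real.sqrt (1+x^2) - x) t| ≤ C / (1+t)^(k+1) := by
  intro k
  match k with
  | 0 =>
    refine ⟨2, by norm_num, fun t ht => ?_⟩
    rw [iteratedDeriv_zero]
    have hp := hh_pos t
    have hle := t_le_hh t ht
    have hsb := sub_bound t ht
    show |hh t - t| ≤ 2 / (1+t)^(0+1)
    rw [abs_of_nonneg (by linarith), le_div_iff₀ (by positivity), pow_one]
    exact hsb
  | 1 =>
    refine ⟨4, by norm_num, fun t ht => ?_⟩
    rw [iteratedDeriv_one]
    rw [show deriv (fun x : ℝ => Real.sqrt (1+x^2) - x) = fun t => t / hh t - 1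
        from funext fun t => (g_hasDeriv t).deriv]
    have hp := hh_pos t
    have hle := t_le_hh t ht
    have hsb := sub_bound t ht
    have hlb := hh_lb t ht
    have h1t : (0:ℝ) < 1 + t := by linarith
    have hneg : t / hh t - 1 ≤ 0 := by
      rw [sub_nonpos, div_le_one hp]; exact hle
    show |t / hh t - 1| ≤ 4 / (1+t)^(1+1)
    rw [abs_of_nonpos hneg, le_div_iff₀ (by positivity)]
    have e : -(t / hh t - 1) = (hh t - t) / hh t := by field_simp; ring
    rw [e, div_mul_eq_mul_div, div_le_iff₀ hp, show (1:ℕ)+1 = 2 from rfl, sq]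
    have key1 : (hh t - t) * (1+t) * (1+t) ≤ 2 * (1+t) :=
      mul_le_mul_of_nonneg_right hsb (le_of_lt h1t)
    nlinarith [key1, hlb]
  | (m+2) =>
    obtain ⟨p, hdeg, hp⟩ := key m
    set S := ∑ i ∈ range (m+1), |p.coeff i| with hSdef
    have hS : 0 ≤ S := Finset.sum_nonneg fun i _ => abs_nonneg _
    refine ⟨S * 2^(2*m+3) + 1, by positivity, fun t ht => ?_⟩
    rw [hp t]
    have hpos := hh_pos t
    have hlb := hh_lb t ht
    have h1t : (0:ℝ) < 1 + t := by linarith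
    rw [abs_div, abs_of_nonneg (le_of_lt (pow_pos hpos _)),
      div_le_div_iff₀ (by positivity) (by positivity)]
    have hb := eval_bound p m hdeg t ht
    have hpow : (1+t)^(2*m+3) ≤ 2^(2*m+3) * hh t^(2*m+3) := by
      calc (1+t)^(2*m+3) ≤ (2 * hh t)^(2*m+3) := pow_le_pow_left₀ (by linarith) hlb _
        _ = 2^(2*m+3) * hh t^(2*m+3) := mul_pow _ _ _
    calc |p.eval t| * (1+t)^(m+2+1)
        ≤ (S * (1+t)^m) * (1+t)^(m+2+1) := by
          apply mul_le_mul_of_nonneg_right hb (by positivity)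
      _ = S * (1+t)^(2*m+3) := by ring
      _ ≤ S * (2^(2*m+3) * hh t^(2*m+3)) := mul_le_mul_of_nonneg_left hpow hS
      _ ≤ (S * 2^(2*m+3) + 1) * hh t^(2*m+3) := by
          have hpp := pow_pos hpos (2*m+3)
          nlinarith
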